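/- Let X be a zero-dimensional Polish space which is not locally compact and whose derived set X' (the set of non-isolated points) is compact. Then the open subgroup H = {f ∈ C_k(X,2) : f ≡ 0 on X'} is homeomorphic to the subgroup {g ∈ C_k(M,2) : g(∞) = 0} of C_k(M,2), where M is the countable metric fan; in particular C_k(X,2) is sequential. -/

import Mathlib

open Filter Topology

/-- The countable metric fan `M = (ω × ω) ∪ {∞}`; `none` plays the role of `∞`. -/
def Fan : Type := Option (ℕ × ℕ)

/-- The basic neighborhood `U(n) = {∞} ∪ ((ω \ n) × ω)` of `∞`. -/
def fanU (n : ℕ) : Set Fan := {x | x = none ∨ ∃ p : ℕ × ℕ, x = some p ∧ n ≤ p.1}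

/-- The fan topology: points of `ω × ω` are isolated and the sets `U(n)` are
basic neighborhoods of `∞`. -/
instance : TopologicalSpace Fan :=
  TopologicalSpace.generateFrom
    ({V | ∃ p : ℕ × ℕ, V = {some p}} ∪ {V | ∃ n : ℕ, V = fanU n})

open Set

/-! ### Generic lemmas about `C(Z, Bool)` with the compact-open topology -/

section Generic
variable {Z : Type*} [TopologicalSpace Z]

/-- The basic sets `{h | h = f on K}` are open. -/
theorem isOpen_eqOnC (f : C(Z, Bool)) {K : Set Z} (hK : IsCompact K) :
    IsOpen {h : C(Z, Bool) | ∀ x ∈ K, h x = f x} := by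
  have : {h : C(Z, Bool) | ∀ x ∈ K, h x = f x} =
      {h : C(Z, Bool) | MapsTo h (K ∩ f ⁻¹' {false}) {false}} ∩
      {h : C(Z, Bool) | MapsTo h (K ∩ f ⁻¹' {true}) {true}} := by
    ext h
    simp only [mem_setOf_eq, mem_inter_iff, MapsTo, mem_inter_iff, mem_preimage,
      mem_singleton_iff]
    constructor
    · intro H
      exact ⟨fun x hx => (H x hx.1).trans hx.2, fun x hx => (H x hx.1).trans hx.2⟩
    · intro H x hx
      cases hfx : f x with
      | false => exact H.1 ⟨hx, hfx⟩
      | true => exact H.2 ⟨hx, hfx⟩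
  rw [this]
  exact (ContinuousMap.isOpen_setOf_mapsTo
      (hK.inter_right (IsClosed.preimage f.continuous isClosed_singleton)) (isOpen_discrete _)).inter
    (ContinuousMap.isOpen_setOf_mapsTo
      (hK.inter_right (IsClosed.preimage f.continuous isClosed_singleton)) (isOpen_discrete _))

/-- Neighborhood basis of `f` in `C(Z, Bool)`: agreement on compact sets. -/
theorem nhds_hasBasis_boolC (f : C(Z, Bool)) :
    (𝓝 f).HasBasis IsCompact (fun K => {h : C(Z, Bool) | ∀ x ∈ K, h x = f x}) := by
  constructor
  intro s
  constructor
  · intro hs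
    rcases mem_nhds_iff.1 hs with ⟨U, hUs, hU, hfU⟩
    have key : ∀ U : Set C(Z, Bool), TopologicalSpace.GenerateOpen
        (Set.image2 (fun K U ↦ {f : C(Z, Bool) | MapsTo f K U}) {K | IsCompact K}
          {t | IsOpen t}) U → f ∈ U →
        ∃ K, IsCompact K ∧ {h : C(Z, Bool) | ∀ x ∈ K, h x = f x} ⊆ U := by
      intro U hU
      induction hU with
      | basic t ht =>
        intro hf
        obtain ⟨K, hK, V, _, rfl⟩ := ht
        exact ⟨K, hK, fun h hh x hx => by
          rw [show h x = f x from hh x hx]; exact hf hx⟩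
      | univ => exact fun _ => ⟨∅, isCompact_empty, fun h _ => trivial⟩
      | inter t₁ t₂ h₁ h₂ ih₁ ih₂ =>
        intro hf
        obtain ⟨K₁, hK₁, hs₁⟩ := ih₁ hf.1
        obtain ⟨K₂, hK₂, hs₂⟩ := ih₂ hf.2
        exact ⟨K₁ ∪ K₂, hK₁.union hK₂, fun h hh =>
          ⟨hs₁ (fun x hx => hh x (Or.inl hx)), hs₂ (fun x hx => hh x (Or.inr hx))⟩⟩
      | sUnion S hS ih =>
        intro hf
        obtain ⟨t, htS, hft⟩ := hf
        obtain ⟨K, hK, hsub⟩ := ih t htS hft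
        exact ⟨K, hK, fun h hh => ⟨t, htS, hsub hh⟩⟩
    obtain ⟨K, hK, hsub⟩ := key U hU hfU
    exact ⟨K, hK, hsub.trans hUs⟩
  · rintro ⟨K, hK, hKs⟩
    exact mem_of_superset ((isOpen_eqOnC f hK).mem_nhds (fun x _ => rfl)) hKs

end Generic

/-! ### Basic topology of the fan -/

theorem fan_isOpen_singleton (p : ℕ × ℕ) : IsOpen ({some p} : Set Fan) :=
  TopologicalSpace.isOpen_generateFrom_of_mem (Or.inl ⟨p, rfl⟩)

theorem fan_isOpen_fanU (n : ℕ) : IsOpen (fanU n) :=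
  TopologicalSpace.isOpen_generateFrom_of_mem (Or.inr ⟨n, rfl⟩)

theorem fan_isOpen_of_not_none {U : Set Fan} (h : (none : Fan) ∉ U) : IsOpen U := by
  have : U = ⋃ x ∈ U, {x} := by simp
  rw [this]
  refine isOpen_biUnion fun x hx => ?_
  match x with
  | none => exact absurd hx h
  | some p => exact fan_isOpen_singleton p

theorem fan_isOpen_iff {U : Set Fan} :
    IsOpen U ↔ ((none : Fan) ∈ U → ∃ n, fanU n ⊆ U) := by
  constructor
  · intro hU
    have hU' : TopologicalSpace.GenerateOpen
        ({V | ∃ p : ℕ × ℕ, V = {some p}} ∪ {V | ∃ n : ℕ, V = fanU n}) U := hU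
    clear hU
    induction hU' with
    | basic t ht =>
      intro hn
      rcases ht with ⟨p, rfl⟩ | ⟨n, rfl⟩
      · exact absurd (Set.mem_singleton_iff.1 hn) (fun h => Option.some_ne_none p h.symm)
      · exact ⟨n, subset_rfl⟩
    | univ => exact fun _ => ⟨0, fun x _ => trivial⟩
    | inter t₁ t₂ h₁ h₂ ih₁ ih₂ =>
      intro hn
      obtain ⟨n₁, hs₁⟩ := ih₁ hn.1
      obtain ⟨n₂, hs₂⟩ := ih₂ hn.2
      refine ⟨max n₁ n₂, fun x hx => ⟨hs₁ ?_, hs₂ ?_⟩⟩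
      · rcases hx with h | ⟨p, rfl, hp⟩
        · exact Or.inl h
        · exact Or.inr ⟨p, rfl, le_trans (le_max_left _ _) hp⟩
      · rcases hx with h | ⟨p, rfl, hp⟩
        · exact Or.inl h
        · exact Or.inr ⟨p, rfl, le_trans (le_max_right _ _) hp⟩
    | sUnion S hS ih =>
      rintro ⟨t, htS, hnt⟩
      obtain ⟨n, hn⟩ := ih t htS hnt
      exact ⟨n, fun x hx => ⟨t, htS, hn hx⟩⟩
  · intro h
    by_cases hn : (none : Fan) ∈ U
    · obtain ⟨n, hsub⟩ := h hn
      have : U = fanU n ∪ {x ∈ U | x ≠ none} := by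
        ext x
        constructor
        · intro hx
          match x with
          | none => exact Or.inl (Or.inl rfl)
          | some p => exact Or.inr ⟨hx, fun h => Option.some_ne_none p h⟩
        · rintro (hx | hx)
          · exact hsub hx
          · exact hx.1
      rw [this]
      exact (fan_isOpen_fanU n).union (fan_isOpen_of_not_none (fun h => h.2 rfl))
    · exact fan_isOpen_of_not_none hn

theorem fan_mem_fanU_none (n : ℕ) : (none : Fan) ∈ fanU n := Or.inl rfl

theorem fan_continuous_iff {F : Fan → Bool} :
    Continuous F ↔ ∃ n : ℕ, ∀ p : ℕ × ℕ, n ≤ p.1 → F (some p) = F none := by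
  constructor
  · intro hF
    have hopen : IsOpen (F ⁻¹' {F none}) := hF.isOpen_preimage _ (isOpen_discrete _)
    obtain ⟨n, hn⟩ := fan_isOpen_iff.1 hopen rfl
    exact ⟨n, fun p hp => hn (Or.inr ⟨p, rfl, hp⟩)⟩
  · rintro ⟨n, hn⟩
    rw [continuous_def]
    intro W _
    rw [fan_isOpen_iff]
    intro hmem
    refine ⟨n, fun x hx => ?_⟩
    rcases hx with h | ⟨p, rfl, hp⟩
    · rw [show x = none from h]; exact hmem
    · show F (some p) ∈ W
      rw [hn p hp]; exact hmem

/-- A compact set of isolated points is finite. -/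
theorem finite_of_isCompact_of_isolated {Z : Type*} [TopologicalSpace Z] {s : Set Z}
    (hs : IsCompact s) (h : ∀ x ∈ s, IsOpen ({x} : Set Z)) : s.Finite := by
  classical
  obtain ⟨t, ht⟩ := hs.elim_finite_subcover (fun x : s => ({x.1} : Set Z))
    (fun x => h x.1 x.2) (fun x hx => Set.mem_iUnion.2 ⟨⟨x, hx⟩, rfl⟩)
  have : s ⊆ (t.image fun x : s => x.1 : Finset Z) := by
    intro x hx
    obtain ⟨i, hi, hxi⟩ := Set.mem_iUnion₂.1 (ht hx)
    rw [Set.mem_singleton_iff] at hxi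
    subst hxi
    exact Finset.mem_coe.2 (Finset.mem_image.2 ⟨i, hi, rfl⟩)
  exact Set.Finite.subset (t.image fun x : s => x.1).finite_toSet this

theorem fan_isolated (p : ℕ × ℕ) : IsOpen ({some p} : Set Fan) := fan_isOpen_singleton p

/-- Columns of a compact subset of the fan are finite. -/
theorem fan_compact_column_finite {K : Set Fan} (hK : IsCompact K) (m : ℕ) :
    {j : ℕ | some (m, j) ∈ K}.Finite := by
  have hcl : IsClosed {x : Fan | ∃ j : ℕ, x = some (m, j)} := by
    rw [← isOpen_compl_iff, fan_isOpen_iff]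
    intro _
    refine ⟨m + 1, fun x hx => ?_⟩
    rcases hx with h | ⟨p, rfl, hp⟩
    · subst h; rintro ⟨j, hj⟩; exact Option.some_ne_none _ hj.symm
    · rintro ⟨j, hj⟩
      replace hj := Option.some.inj hj
      subst hj
      omega
  have hC : IsCompact (K ∩ {x : Fan | ∃ j : ℕ, x = some (m, j)}) := hK.inter_right hcl
  have hfin : (K ∩ {x : Fan | ∃ j : ℕ, x = some (m, j)}).Finite :=
    finite_of_isCompact_of_isolated hC (by
      rintro x ⟨-, j, rfl⟩
      exact fan_isOpen_singleton (m, j))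
  have : {j : ℕ | some (m, j) ∈ K} ⊆
      (fun j => (some (m, j) : Fan)) ⁻¹' (K ∩ {x : Fan | ∃ j : ℕ, x = some (m, j)}) := by
    intro j hj
    exact ⟨hj, j, rfl⟩
  refine Set.Finite.subset (Set.Finite.preimage ?_ hfin) this
  intro a _ b _ hab
  replace hab := Prod.mk.inj (Option.some.inj hab)
  exact hab.2

/-- `{∞} ∪ S` is compact whenever `S` has finite columns. -/
theorem fan_isCompact_of_column_finite {S : Set (ℕ × ℕ)}
    (hS : ∀ m, {j | (m, j) ∈ S}.Finite) :
    IsCompact ((insert (none : Fan) ((fun p => (some p : Fan)) '' S) : Set Fan)) := by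
  classical
  refine isCompact_of_finite_subcover fun {ι} U hUopen hcover => ?_
  obtain ⟨i₀, hi₀⟩ := Set.mem_iUnion.1 (hcover (Set.mem_insert _ _))
  obtain ⟨n, hn⟩ := fan_isOpen_iff.1 (hUopen i₀) hi₀
  have hRfin : {p : ℕ × ℕ | p ∈ S ∧ p.1 < n}.Finite := by
    have : {p : ℕ × ℕ | p ∈ S ∧ p.1 < n} ⊆
        ⋃ m ∈ Finset.range n, (fun j => (m, j)) '' {j | (m, j) ∈ S} := by
      rintro ⟨a, b⟩ ⟨hab, ha⟩
      exact Set.mem_iUnion₂.2 ⟨a, Finset.mem_range.2 ha, b, hab, rfl⟩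
    exact Set.Finite.subset (Set.Finite.biUnion (Finset.range n).finite_toSet
      (fun m _ => (hS m).image _)) this
  have hne : Nonempty ι := ⟨i₀⟩
  choose! ix hix using fun (p : ℕ × ℕ) (hp : (some p : Fan) ∈ ⋃ i, U i) =>
    Set.mem_iUnion.1 hp
  refine ⟨insert i₀ (hRfin.toFinset.image ix), fun x hx => ?_⟩
  rcases hx with rfl | ⟨p, hpS, rfl⟩
  · exact Set.mem_biUnion (Finset.mem_insert_self _ _) hi₀
  · by_cases hp1 : n ≤ p.1
    · exact Set.mem_biUnion (Finset.mem_insert_self _ _) (hn (Or.inr ⟨p, rfl, hp1⟩))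
    · have hpmem : (some p : Fan) ∈ ⋃ i, U i := hcover (Set.mem_insert_iff.2
        (Or.inr ⟨p, hpS, rfl⟩))
      refine Set.mem_biUnion (Finset.mem_insert_of_mem ?_) (hix p hpmem)
      exact Finset.mem_image.2 ⟨p, hRfin.mem_toFinset.2 ⟨hpS, not_le.1 hp1⟩, rfl⟩

/-! ### The group `FanG` and its compact pieces `FanGn` -/

def FanG : Set C(Fan, Bool) := {g | g none = false}

def FanGn (n : ℕ) : Set C(Fan, Bool) :=
  {g | g none = false ∧ ∀ p : ℕ × ℕ, n ≤ p.1 → g (some p) = false}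

theorem FanGn_subset_FanG {n : ℕ} : FanGn n ⊆ FanG := fun _ hg => hg.1

theorem FanGn_mono {m n : ℕ} (h : m ≤ n) : FanGn m ⊆ FanGn n :=
  fun g hg => ⟨hg.1, fun p hp => hg.2 p (le_trans h hp)⟩

theorem exists_FanGn {g : C(Fan, Bool)} (hg : g ∈ FanG) : ∃ n, g ∈ FanGn n := by
  obtain ⟨n, hn⟩ := fan_continuous_iff.1 g.continuous
  exact ⟨n, hg, fun p hp => (hn p hp).trans hg⟩

theorem isClosed_FanG : IsClosed FanG :=
  IsClosed.preimage (continuous_eval_const (none : Fan)) isClosed_singleton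

theorem isClosed_eval {Z : Type*} [TopologicalSpace Z] (z : Z) (b : Bool) :
    IsClosed {g : C(Z, Bool) | g z = b} :=
  IsClosed.preimage (continuous_eval_const z) isClosed_singleton

theorem isOpen_eval {Z : Type*} [TopologicalSpace Z] (z : Z) (b : Bool) :
    IsOpen {g : C(Z, Bool) | g z = b} :=
  IsOpen.preimage (continuous_eval_const z) (isOpen_discrete ({b} : Set Bool))

theorem isClosed_FanGn (n : ℕ) : IsClosed (FanGn n) := by
  have : FanGn n = FanG ∩ ⋂ (p : {p : ℕ × ℕ // n ≤ p.1}), {g : C(Fan, Bool) | g (some p.1) = false} := by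
    ext g
    constructor
    · rintro ⟨h1, h2⟩
      exact ⟨h1, Set.mem_iInter.2 fun p => h2 p.1 p.2⟩
    · rintro ⟨h1, h2⟩
      exact ⟨h1, fun p hp => Set.mem_iInter.1 h2 ⟨p, hp⟩⟩
  rw [this]
  exact isClosed_FanG.inter (isClosed_iInter fun p => isClosed_eval _ _)

/-- The parametrization of `FanGn n` by a compact product. -/
noncomputable def fanTheta (n : ℕ) (u : {p : ℕ × ℕ // p.1 < n} → Bool) : C(Fan, Bool) :=
  ⟨fun x => match x with
    | none => false
    | some p => if h : p.1 < n then u ⟨p, h⟩ else false,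
   by
    refine fan_continuous_iff.2 ⟨n, fun p hp => ?_⟩
    simp only [dif_neg (not_lt.2 hp)]⟩

theorem fanTheta_mem (n : ℕ) (u : {p : ℕ × ℕ // p.1 < n} → Bool) : fanTheta n u ∈ FanGn n := by
  refine ⟨rfl, fun p hp => ?_⟩
  show (if h : p.1 < n then u ⟨p, h⟩ else false) = false
  simp only [dif_neg (not_lt.2 hp)]

theorem fanTheta_surj {n : ℕ} {g : C(Fan, Bool)} (hg : g ∈ FanGn n) :
    fanTheta n (fun q => g (some q.1)) = g := by
  ext x
  match x with
  | none => exact hg.1.symm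
  | some p =>
    show (if h : p.1 < n then g (some p) else false) = g (some p)
    by_cases h : p.1 < n
    · simp only [dif_pos h]
    · simp only [dif_neg h]
      exact (hg.2 p (not_lt.1 h)).symm

theorem fanTheta_continuous (n : ℕ) : Continuous (fanTheta n) := by
  rw [continuous_iff_continuousAt]
  intro u
  rw [ContinuousAt, (nhds_hasBasis_boolC (fanTheta n u)).tendsto_right_iff]
  intro K hK
  have hFfin : {q : {p : ℕ × ℕ // p.1 < n} | some q.1 ∈ K}.Finite := by
    have h1 : ({p : ℕ × ℕ | some p ∈ K ∧ p.1 < n}).Finite := by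
      have : {p : ℕ × ℕ | some p ∈ K ∧ p.1 < n} ⊆
          ⋃ m ∈ Finset.range n, (fun j => (m, j)) '' {j : ℕ | some (m, j) ∈ K} := by
        rintro ⟨a, b⟩ ⟨hab, ha⟩
        exact Set.mem_iUnion₂.2 ⟨a, Finset.mem_range.2 ha, b, hab, rfl⟩
      exact Set.Finite.subset (Set.Finite.biUnion (Finset.range n).finite_toSet
        (fun m _ => (fan_compact_column_finite hK m).image _)) this
    have h2 : {q : {p : ℕ × ℕ // p.1 < n} | some q.1 ∈ K} =
        Subtype.val ⁻¹' {p : ℕ × ℕ | some p ∈ K ∧ p.1 < n} := by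
      ext q
      exact ⟨fun hq => ⟨hq, q.2⟩, fun hq => hq.1⟩
    rw [h2]
    exact Set.Finite.preimage (Set.injOn_of_injective Subtype.val_injective) h1
  have hopen : IsOpen {u' : {p : ℕ × ℕ // p.1 < n} → Bool |
      ∀ q ∈ {q : {p : ℕ × ℕ // p.1 < n} | some q.1 ∈ K}, u' q = u q} := by
    rw [show {u' : {p : ℕ × ℕ // p.1 < n} → Bool |
        ∀ q ∈ {q : {p : ℕ × ℕ // p.1 < n} | some q.1 ∈ K}, u' q = u q} =
        ⋂ q ∈ {q : {p : ℕ × ℕ // p.1 < n} | some q.1 ∈ K},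
          (fun u' : {p : ℕ × ℕ // p.1 < n} → Bool => u' q) ⁻¹' {u q} from by
      ext u'; simp [Set.mem_iInter]]
    exact hFfin.isOpen_biInter fun q _ =>
      IsOpen.preimage (continuous_apply q) (isOpen_discrete _)
  filter_upwards [hopen.mem_nhds (fun q _ => rfl)] with u' hu'
  intro x hx
  match x with
  | none => rfl
  | some p =>
    show (if h : p.1 < n then u' ⟨p, h⟩ else false) = (if h : p.1 < n then u ⟨p, h⟩ else false)
    by_cases h : p.1 < n
    · simp only [dif_pos h]
      exact hu' ⟨p, h⟩ hx
    · simp only [dif_neg h]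

theorem isCompact_FanGn (n : ℕ) : IsCompact (FanGn n) := by
  have : FanGn n = Set.range (fanTheta n) := by
    ext g
    constructor
    · intro hg
      exact ⟨fun q => g (some q.1), fanTheta_surj hg⟩
    · rintro ⟨u, rfl⟩
      exact fanTheta_mem n u
  rw [this, ← Set.image_univ]
  exact IsCompact.image isCompact_univ (fanTheta_continuous n)

/-! ### The diagonal argument on the fan side -/

def FanP (F : Set C(Fan, Bool)) (g₀ : C(Fan, Bool)) (n : ℕ) (T : Finset (ℕ × ℕ)) : Prop :=
  ∀ h, h ∈ FanGn n → (∀ p ∈ T, h (some p) = g₀ (some p)) → h ∉ F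

theorem fan_diagonal {F : Set C(Fan, Bool)} (hF : ∀ n, IsClosed (F ∩ FanGn n))
    (hFG : F ⊆ FanG) {g₀ : C(Fan, Bool)} (hg₀ : g₀ ∈ FanG) (hg₀F : g₀ ∉ F) :
    ∃ S : Set (ℕ × ℕ), (∀ m, {j | (m, j) ∈ S}.Finite) ∧
      ∀ h, h ∈ FanG → (∀ p ∈ S, h (some p) = g₀ (some p)) → h ∉ F := by
  classical
  obtain ⟨n₀, hn₀⟩ := exists_FanGn hg₀
  -- base step
  have base : ∃ T₀ : Finset (ℕ × ℕ), FanP F g₀ n₀ T₀ := by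
    set C0 : Set C(Fan, Bool) := F ∩ FanGn n₀ with hC0def
    have hC0cpt : IsCompact C0 :=
      (isCompact_FanGn n₀).of_isClosed_subset (hF n₀) Set.inter_subset_right
    have claim : ∀ h : C(Fan, Bool), h ∈ C0 → ∃ p : ℕ × ℕ, ¬ (h (some p) = g₀ (some p)) := by
      intro h hh
      by_contra hcon
      push_neg at hcon
      have : h = g₀ := by
        ext x
        match x with
        | none => exact (hFG hh.1).trans hg₀.symm
        | some p => exact hcon p
      exact hg₀F (this ▸ hh.1)
    choose! pfn hpfn using claim
    obtain ⟨t, ht⟩ := hC0cpt.elim_finite_subcover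
      (fun i : ↥C0 => {f : C(Fan, Bool) | f (some (pfn i.1)) = i.1 (some (pfn i.1))})
      (fun i => isOpen_eval _ _) (fun h hh => Set.mem_iUnion.2 ⟨⟨h, hh⟩, rfl⟩)
    refine ⟨t.image (fun i => pfn i.1), ?_⟩
    intro h hhn hagree hhF
    obtain ⟨i, hit, hhi⟩ := Set.mem_iUnion₂.1 (ht ⟨hhF, hhn⟩)
    have h1 : h (some (pfn i.1)) = i.1 (some (pfn i.1)) := hhi
    have h2 : h (some (pfn i.1)) = g₀ (some (pfn i.1)) :=
      hagree _ (Finset.mem_image.2 ⟨i, hit, rfl⟩)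
    exact hpfn i.1 i.2 (h1 ▸ h2.symm ▸ rfl)
  -- inductive step
  have step : ∀ n, n₀ ≤ n → ∀ T : Finset (ℕ × ℕ), FanP F g₀ n T →
      ∃ T' : Finset (ℕ × ℕ), FanP F g₀ (n + 1) T' ∧ T ⊆ T' ∧ ∀ p ∈ T', p ∈ T ∨ p.1 = n := by
    intro n hn T hPT
    set Cs : Set C(Fan, Bool) :=
      (F ∩ FanGn (n + 1)) ∩ {h | ∀ p ∈ T, h (some p) = g₀ (some p)} with hCsdef
    have hCscl : IsClosed Cs := (hF (n + 1)).inter (by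
      have : {h : C(Fan, Bool) | ∀ p ∈ T, h (some p) = g₀ (some p)} =
          ⋂ p ∈ (T : Set (ℕ × ℕ)), {h : C(Fan, Bool) | h (some p) = g₀ (some p)} := by
        ext h; simp [Set.mem_iInter]
      rw [this]
      exact isClosed_biInter fun p _ => isClosed_eval _ _)
    have hCscpt : IsCompact Cs :=
      (isCompact_FanGn (n + 1)).of_isClosed_subset hCscl
        (fun h hh => hh.1.2)
    have claim : ∀ h : C(Fan, Bool), h ∈ Cs → ∃ i : ℕ, h (some (n, i)) = true := by
      intro h hh
      by_contra hcon
      push_neg at hcon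
      have hmem : h ∈ FanGn n := by
        refine ⟨hh.1.2.1, fun p hp => ?_⟩
        rcases eq_or_lt_of_le hp with heq | hlt
        · have : p = (n, p.2) := by
            ext
            · exact heq.symm
            · rfl
          rw [this]
          exact Bool.eq_false_iff.mpr (hcon p.2)
        · exact hh.1.2.2 p hlt
      exact hPT h hmem hh.2 hh.1.1
    obtain ⟨s, hs⟩ := hCscpt.elim_finite_subcover
      (fun i : ℕ => {f : C(Fan, Bool) | f (some (n, i)) = true})
      (fun i => isOpen_eval _ _)
      (fun h hh => by obtain ⟨i, hi⟩ := claim h hh; exact Set.mem_iUnion.2 ⟨i, hi⟩)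
    refine ⟨T ∪ s.image (fun j => (n, j)), ?_, Finset.subset_union_left, ?_⟩
    · intro h hhn hagree hhF
      have hhCs : h ∈ Cs := ⟨⟨hhF, hhn⟩,
        fun p hp => hagree p (Finset.mem_union_left _ hp)⟩
      obtain ⟨i, his, hhi⟩ := Set.mem_iUnion₂.1 (hs hhCs)
      have h1 : h (some (n, i)) = true := hhi
      have h2 : h (some (n, i)) = g₀ (some (n, i)) :=
        hagree _ (Finset.mem_union_right _ (Finset.mem_image.2 ⟨i, his, rfl⟩))
      have h3 : g₀ (some (n, i)) = false := hn₀.2 (n, i) hn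
      rw [h2, h3] at h1
      exact Bool.noConfusion h1
    · intro p hp
      rcases Finset.mem_union.1 hp with h | h
      · exact Or.inl h
      · obtain ⟨j, _, rfl⟩ := Finset.mem_image.1 h
        exact Or.inr rfl
  -- the recursion
  obtain ⟨T₀, hT₀⟩ := base
  choose! stepT hstep1 hstep2 hstep3 using step
  set Tseq : ℕ → Finset (ℕ × ℕ) :=
    fun k => Nat.rec T₀ (fun k Tk => stepT (n₀ + k) Tk) k with hTseq
  have hTsucc : ∀ k, Tseq (k + 1) = stepT (n₀ + k) (Tseq k) := fun k => rfl
  have hP : ∀ k, FanP F g₀ (n₀ + k) (Tseq k) := by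
    intro k
    induction k with
    | zero => exact hT₀
    | succ k ih =>
      rw [hTsucc]
      exact hstep1 (n₀ + k) (Nat.le_add_right _ _) (Tseq k) ih
  have hmono : ∀ k, Tseq k ⊆ Tseq (k + 1) := by
    intro k
    rw [hTsucc]
    exact hstep2 (n₀ + k) (Nat.le_add_right _ _) (Tseq k) (hP k)
  have hmono' : ∀ k l, k ≤ l → Tseq k ⊆ Tseq l := by
    intro k l hkl
    induction l with
    | zero => rw [Nat.le_zero.1 hkl]
    | succ l ih =>
      rcases Nat.lt_or_ge k (l + 1) with h | h
      · exact (ih (Nat.lt_succ_iff.1 h)).trans (hmono l)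
      · rw [Nat.le_antisymm hkl h]
  have hnew : ∀ k p, p ∈ Tseq (k + 1) → p ∈ Tseq k ∨ p.1 = n₀ + k := by
    intro k
    rw [hTsucc]
    exact hstep3 (n₀ + k) (Nat.le_add_right _ _) (Tseq k) (hP k)
  have hcol : ∀ k p, p ∈ Tseq k → p ∈ Tseq 0 ∨ (n₀ ≤ p.1 ∧ p ∈ Tseq (p.1 - n₀ + 1)) := by
    intro k
    induction k with
    | zero => exact fun p hp => Or.inl hp
    | succ k ih =>
      intro p hp
      rcases hnew k p hp with h | h
      · exact ih p h
      · refine Or.inr ⟨h ▸ Nat.le_add_right _ _, ?_⟩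
        have : p.1 - n₀ + 1 = k + 1 := by omega
        rw [this]
        exact hp
  refine ⟨{p : ℕ × ℕ | ∃ k, p ∈ Tseq k}, ?_, ?_⟩
  · intro m
    have hsub : {j | (m, j) ∈ {p : ℕ × ℕ | ∃ k, p ∈ Tseq k}} ⊆
        (fun j => (m, j)) ⁻¹' ↑(Tseq 0 ∪ Tseq (m - n₀ + 1)) := by
      rintro j ⟨k, hk⟩
      rcases hcol k (m, j) hk with h | ⟨_, h⟩
      · exact Finset.mem_union_left _ h
      · exact Finset.mem_union_right _ h
    refine Set.Finite.subset (Set.Finite.preimage ?_ (Tseq 0 ∪ Tseq (m - n₀ + 1)).finite_toSet) hsub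
    intro a _ b _ hab
    exact (Prod.mk.injEq _ _ _ _ ▸ hab).2
  · intro h hh hagree
    obtain ⟨n, hn⟩ := exists_FanGn hh
    have hmem : h ∈ FanGn (n₀ + n) := FanGn_mono (Nat.le_add_left _ _) hn
    exact hP n h hmem (fun p hp => hagree p ⟨n, hp⟩)

/-! ### Sequentiality of `FanG` -/

theorem subtype_column_finite {K : Set Fan} (hK : IsCompact K) (n : ℕ) :
    {q : {p : ℕ × ℕ // p.1 < n} | some q.1 ∈ K}.Finite := by
  have h1 : ({p : ℕ × ℕ | some p ∈ K ∧ p.1 < n}).Finite := by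
    have : {p : ℕ × ℕ | some p ∈ K ∧ p.1 < n} ⊆
        ⋃ m ∈ Finset.range n, (fun j => (m, j)) '' {j : ℕ | some (m, j) ∈ K} := by
      rintro ⟨a, b⟩ ⟨hab, ha⟩
      exact Set.mem_iUnion₂.2 ⟨a, Finset.mem_range.2 ha, b, hab, rfl⟩
    exact Set.Finite.subset (Set.Finite.biUnion (Finset.range n).finite_toSet
      (fun m _ => (fan_compact_column_finite hK m).image _)) this
  have h2 : {q : {p : ℕ × ℕ // p.1 < n} | some q.1 ∈ K} =
      Subtype.val ⁻¹' {p : ℕ × ℕ | some p ∈ K ∧ p.1 < n} := by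
    ext q
    exact ⟨fun hq => ⟨hq, q.2⟩, fun hq => hq.1⟩
  rw [h2]
  exact Set.Finite.preimage (Set.injOn_of_injective Subtype.val_injective) h1

theorem nhds_basis_FanGn (n : ℕ) (g : ↥(FanGn n)) :
    (𝓝 g).HasBasis (fun _ : Finset {p : ℕ × ℕ // p.1 < n} => True)
      (fun t => {h : ↥(FanGn n) | ∀ q ∈ t, h.1 (some q.1) = g.1 (some q.1)}) := by
  obtain ⟨g, hg⟩ := g
  rw [nhds_subtype_eq_comap]
  refine ((nhds_hasBasis_boolC g).comap _).to_hasBasis ?_ ?_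
  · intro K hK
    refine ⟨(subtype_column_finite hK n).toFinset, trivial, ?_⟩
    rintro ⟨h, hh⟩ hmem x hx
    match x with
    | none => exact hh.1.trans hg.1.symm
    | some p =>
      by_cases hpn : p.1 < n
      · exact hmem ⟨p, hpn⟩ ((subtype_column_finite hK n).mem_toFinset.2 hx)
      · exact (hh.2 p (not_lt.1 hpn)).trans (hg.2 p (not_lt.1 hpn)).symm
  · intro t _
    refine ⟨(fun q : {p : ℕ × ℕ // p.1 < n} => (some q.1 : Fan)) '' ↑t,
      (t.finite_toSet.image _).isCompact, ?_⟩
    rintro ⟨h, hh⟩ hmem q hq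
    exact hmem (some q.1) (Set.mem_image_of_mem _ (Finset.mem_coe.2 hq))

instance FanGn.firstCountable (n : ℕ) : FirstCountableTopology ↥(FanGn n) :=
  ⟨fun g => (nhds_basis_FanGn n g).isCountablyGenerated⟩

theorem trace_closed {F : Set C(Fan, Bool)} (hF : IsSeqClosed F) (n : ℕ) :
    IsClosed (F ∩ FanGn n) := by
  have h1 : IsSeqClosed (Subtype.val ⁻¹' F : Set ↥(FanGn n)) :=
    hF.preimage continuous_subtype_val.seqContinuous
  have h2 : IsClosed (Subtype.val ⁻¹' F : Set ↥(FanGn n)) := h1.isClosed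
  have h3 : F ∩ FanGn n = Subtype.val '' (Subtype.val ⁻¹' F : Set ↥(FanGn n)) := by
    rw [Set.image_preimage_eq_inter_range, Subtype.range_coe]
  rw [h3]
  exact ((isClosed_FanGn n).isClosedEmbedding_subtypeVal).isClosedMap _ h2

theorem sequentialSpace_FanG : SequentialSpace ↥FanG := by
  refine ⟨fun F' hF' => ?_⟩
  set F : Set C(Fan, Bool) := Subtype.val '' F' with hFdef
  have hFsub : F ⊆ FanG := by
    rintro f ⟨f', _, rfl⟩
    exact f'.2
  have hFseq : IsSeqClosed F := by
    intro u x hu hux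
    have hxG : x ∈ FanG := isClosed_FanG.isSeqClosed (fun k => hFsub (hu k)) hux
    set u' : ℕ → ↥FanG := fun k => ⟨u k, hFsub (hu k)⟩ with hu'def
    have hu'F : ∀ k, u' k ∈ F' := by
      intro k
      obtain ⟨f', hf', hval⟩ := hu k
      have : u' k = f' := Subtype.ext hval.symm
      rw [this]
      exact hf'
    have htend : Filter.Tendsto u' atTop (𝓝 (⟨x, hxG⟩ : ↥FanG)) :=
      tendsto_subtype_rng.2 hux
    have := hF' hu'F htend
    exact ⟨⟨x, hxG⟩, this, rfl⟩
  rw [← isOpen_compl_iff]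
  rw [isOpen_iff_mem_nhds]
  intro g hg
  have hg₀F : g.1 ∉ F := by
    rintro ⟨g', hg', hval⟩
    exact hg (by rwa [show g = g' from Subtype.ext hval.symm])
  obtain ⟨S, hScol, hSprop⟩ := fan_diagonal (fun n => trace_closed hFseq n) hFsub g.2 hg₀F
  have hKcpt : IsCompact ((insert (none : Fan) ((fun p => (some p : Fan)) '' S) : Set Fan)) :=
    fan_isCompact_of_column_finite hScol
  have hWopen : IsOpen {h : C(Fan, Bool) |
      ∀ x ∈ (insert (none : Fan) ((fun p => (some p : Fan)) '' S) : Set Fan), h x = g.1 x} :=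
    isOpen_eqOnC g.1 hKcpt
  refine Filter.mem_of_superset
    ((hWopen.preimage continuous_subtype_val).mem_nhds (fun x _ => rfl)) ?_
  rintro h hh hhF'
  refine hSprop h.1 h.2 (fun p hp => hh (some p) (Set.mem_insert_iff.2 (Or.inr ⟨p, hp, rfl⟩))) ?_
  exact ⟨h, hhF', rfl⟩

/-! ### X-side structure -/

/-- In a second countable space the set of isolated points is countable. -/
theorem countable_isolated {X : Type*} [TopologicalSpace X]
    [SecondCountableTopology X] :
    {x : X | IsOpen ({x} : Set X)}.Countable := by
  obtain ⟨b, hbc, -, hbb⟩ := TopologicalSpace.exists_countable_basis X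
  have hsub : {x : X | IsOpen ({x} : Set X)} ⊆ ⋃ s ∈ {s ∈ b | ∃ y : X, s = {y}}, s := by
    intro x hx
    obtain ⟨v, hvb, hxv, hvsub⟩ := hbb.exists_subset_of_mem_open (Set.mem_singleton x) hx
    have : v = {x} := Set.Subset.antisymm hvsub (by simpa using hxv)
    exact Set.mem_iUnion₂.2 ⟨v, ⟨hvb, x, this⟩, hxv⟩
  refine Set.Countable.mono hsub ?_
  refine Set.Countable.biUnion (hbc.mono (Set.sep_subset _ _)) ?_
  rintro s ⟨-, y, rfl⟩
  exact Set.countable_singleton y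

section Xside

variable {X : Type*} [TopologicalSpace X]

/-- Compactness criterion on the X side. -/
theorem Xcpt (V : ℕ → Set X)
    (hX'V : ∀ n, {x : X | ¬ IsOpen ({x} : Set X)} ⊆ V n)
    (hV0 : V 0 = Set.univ)
    (hanti : ∀ n m, n ≤ m → V m ⊆ V n)
    (hbase : ∀ U : Set X, IsOpen U → {x : X | ¬ IsOpen ({x} : Set X)} ⊆ U → ∃ n, V n ⊆ U)
    (hX'cpt : IsCompact {x : X | ¬ IsOpen ({x} : Set X)})
    (A : Set X) (hAX' : ∀ x ∈ A, IsOpen ({x} : Set X))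
    (hAcol : ∀ m, (A ∩ (V m \ V (m + 1))).Finite) :
    IsCompact ({x : X | ¬ IsOpen ({x} : Set X)} ∪ A) := by
  classical
  have blockmem : ∀ x ∈ A, ∀ n, x ∉ V n → ∃ m, m < n ∧ x ∈ V m \ V (m + 1) := by
    intro x hxA n
    induction n with
    | zero => intro h; exact absurd (hV0 ▸ Set.mem_univ x) h
    | succ n ih =>
      intro h
      by_cases hx : x ∈ V n
      · exact ⟨n, Nat.lt_succ_self n, hx, h⟩
      · obtain ⟨m, hm, hmem⟩ := ih hx
        exact ⟨m, hm.trans (Nat.lt_succ_self n), hmem⟩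
  refine isCompact_of_finite_subcover fun {ι} U hUopen hcover => ?_
  have hX'sub : {x : X | ¬ IsOpen ({x} : Set X)} ⊆ ⋃ i, U i :=
    fun x hx => hcover (Or.inl hx)
  obtain ⟨t₀, ht₀⟩ := hX'cpt.elim_finite_subcover U hUopen hX'sub
  have hUo : IsOpen (⋃ i ∈ t₀, U i) := isOpen_biUnion fun i _ => hUopen i
  obtain ⟨n, hn⟩ := hbase _ hUo ht₀
  have hfin : (A \ V n).Finite := by
    have : A \ V n ⊆ ⋃ m ∈ Finset.range n, A ∩ (V m \ V (m + 1)) := by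
      rintro x ⟨hxA, hxV⟩
      obtain ⟨m, hm, hmem⟩ := blockmem x hxA n hxV
      exact Set.mem_iUnion₂.2 ⟨m, Finset.mem_range.2 hm, hxA, hmem⟩
    exact Set.Finite.subset (Set.Finite.biUnion (Finset.range n).finite_toSet
      (fun m _ => hAcol m)) this
  set t₁ := hfin.toFinset with ht₁
  refine ⟨t₀ ∪ t₁.attach.image (fun x => Classical.choose (Set.mem_iUnion.1
    (hcover (Or.inr (hfin.mem_toFinset.1 x.2).1)))), fun x hx => ?_⟩
  rcases hx with hx | hx
  · obtain ⟨i, hit, hxi⟩ := Set.mem_iUnion₂.1 (ht₀ hx)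
    exact Set.mem_biUnion (Finset.mem_union_left _ hit) hxi
  · by_cases hxV : x ∈ V n
    · obtain ⟨i, hit, hxi⟩ := Set.mem_iUnion₂.1 (hn hxV)
      exact Set.mem_biUnion (Finset.mem_union_left _ hit) hxi
    · have hxt : x ∈ t₁ := hfin.mem_toFinset.2 ⟨hx, hxV⟩
      refine Set.mem_biUnion (Finset.mem_union_right _
        (Finset.mem_image.2 ⟨⟨x, hxt⟩, Finset.mem_attach _ _, rfl⟩)) ?_
      exact Classical.choose_spec (Set.mem_iUnion.1
        (hcover (Or.inr (hfin.mem_toFinset.1 hxt).1)))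

end Xside

theorem X_structure {X : Type*} [TopologicalSpace X] [PolishSpace X]
    (hzd : ∀ (x : X) (U : Set X), IsOpen U → x ∈ U →
      ∃ V : Set X, IsClopen V ∧ x ∈ V ∧ V ⊆ U)
    (hnlc : ¬ WeaklyLocallyCompactSpace X)
    (hX' : IsCompact {x : X | ¬ IsOpen ({x} : Set X)}) :
    ∃ V : ℕ → Set X,
      (∀ n, IsClopen (V n)) ∧
      (∀ n, {x : X | ¬ IsOpen ({x} : Set X)} ⊆ V n) ∧
      V 0 = Set.univ ∧
      (∀ n m, n ≤ m → V m ⊆ V n) ∧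
      (∀ U : Set X, IsOpen U → {x : X | ¬ IsOpen ({x} : Set X)} ⊆ U → ∃ n, V n ⊆ U) ∧
      (∀ x, IsOpen ({x} : Set X) → ∃ n, x ∉ V n) ∧
      (∀ n, (V n \ V (n + 1)).Infinite) := by
  classical
  letI := TopologicalSpace.upgradeIsCompletelyMetrizable X
  set X' : Set X := {x : X | ¬ IsOpen ({x} : Set X)} with hX'def
  have hX'cl : IsClosed X' := by
    rw [← isOpen_compl_iff]
    have : X'ᶜ = ⋃ x ∈ {x : X | IsOpen ({x} : Set X)}, {x} := by
      ext y
      simp only [Set.mem_compl_iff, hX'def, Set.mem_setOf_eq, not_not, Set.mem_iUnion]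
      exact ⟨fun h => ⟨y, h, rfl⟩, by rintro ⟨x, hx, rfl⟩; exact hx⟩
    rw [this]
    exact isOpen_biUnion fun x hx => hx
  -- Step 2: clopen sets between X' and thickenings
  have hV' : ∀ n : ℕ, ∃ V' : Set X, IsClopen V' ∧ X' ⊆ V' ∧
      V' ⊆ Metric.thickening (1 / (n + 1 : ℝ)) X' := by
    intro n
    have hpos : (0 : ℝ) < 1 / (n + 1 : ℝ) := by positivity
    have claim : ∀ x : X, x ∈ X' → ∃ C : Set X, IsClopen C ∧ x ∈ C ∧
        C ⊆ Metric.thickening (1 / (n + 1 : ℝ)) X' :=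
      fun x hx => hzd x _ Metric.isOpen_thickening (Metric.self_subset_thickening hpos X' hx)
    choose! Cf hCf1 hCf2 hCf3 using claim
    obtain ⟨t, ht⟩ := hX'.elim_finite_subcover (fun x : ↥X' => Cf x.1)
      (fun x => (hCf1 x.1 x.2).isOpen) (fun x hx => Set.mem_iUnion.2 ⟨⟨x, hx⟩, hCf2 x hx⟩)
    refine ⟨⋃ x ∈ t, Cf x.1, isClopen_biUnion_finset (fun x _ => hCf1 x.1 x.2), ht, ?_⟩
    exact Set.iUnion₂_subset fun x _ => hCf3 x.1 x.2
  choose V' hV'1 hV'2 hV'3 using hV'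
  -- Step 3: decreasing clopen sets
  set V₁ : ℕ → Set X := fun n => ⋂ k ∈ Finset.range n, V' k with hV₁def
  have hV₁cl : ∀ n, IsClopen (V₁ n) := fun n => isClopen_biInter_finset fun k _ => hV'1 k
  have hV₁X' : ∀ n, X' ⊆ V₁ n := fun n =>
    Set.subset_iInter₂ fun k _ => hV'2 k
  have hV₁0 : V₁ 0 = Set.univ := by simp [hV₁def]
  have hV₁anti : ∀ n m, n ≤ m → V₁ m ⊆ V₁ n := by
    intro n m hnm
    apply Set.biInter_subset_biInter_left
    intro k hk
    exact Finset.mem_range.2 (lt_of_lt_of_le (Finset.mem_range.1 hk) hnm)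
  have hV₁sub : ∀ k, V₁ (k + 1) ⊆ V' k := fun k =>
    Set.iInter₂_subset k (Finset.mem_range.2 (Nat.lt_succ_self k))
  have hV₁base : ∀ U : Set X, IsOpen U → X' ⊆ U → ∃ n, V₁ n ⊆ U := by
    intro U hU hsub
    obtain ⟨δ, hδpos, hδsub⟩ := hX'.exists_thickening_subset_open hU hsub
    obtain ⟨k, hk⟩ := exists_nat_one_div_lt hδpos
    refine ⟨k + 1, (hV₁sub k).trans ((hV'3 k).trans ?_)⟩
    exact (Metric.thickening_mono hk.le X').trans hδsub
  have hV₁esc : ∀ x, IsOpen ({x} : Set X) → ∃ n, x ∉ V₁ n := by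
    intro x hx
    by_contra hcon
    push_neg at hcon
    have hW : ∀ k : ℕ, x ∈ Metric.thickening (1 / (k + 1 : ℝ)) X' :=
      fun k => hV'3 k (hV₁sub k (hcon (k + 1)))
    rcases Set.eq_empty_or_nonempty X' with hemp | hne
    · have := hW 0
      rw [hemp, Metric.thickening_empty] at this
      exact this.elim
    · have h0 : Metric.infDist x X' = 0 := by
        refine le_antisymm ?_ Metric.infDist_nonneg
        by_contra hpos
        push_neg at hpos
        obtain ⟨k, hk⟩ := exists_nat_one_div_lt hpos
        exact absurd ((Metric.mem_thickening_iff_infDist_lt hne).1 (hW k)) (by linarith)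
      have : x ∈ X' := hX'cl.closure_eq ▸ (Metric.mem_closure_iff_infDist_zero hne).2 h0
      exact this hx
  -- Step 4: noncompactness
  have hnc : ∀ n, ¬ IsCompact (V₁ n) := by
    intro n hcpt
    refine hnlc ⟨fun x => ?_⟩
    by_cases hx : IsOpen ({x} : Set X)
    · exact ⟨{x}, isCompact_singleton, hx.mem_nhds rfl⟩
    · exact ⟨V₁ n, hcpt, (hV₁cl n).isOpen.mem_nhds (hV₁X' n hx)⟩
  -- Step 5: infinitely many infinite blocks
  have hinf : ∀ n, ∃ m, n ≤ m ∧ (V₁ m \ V₁ (m + 1)).Infinite := by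
    intro n
    by_contra hcon
    push_neg at hcon
    have hfin : ∀ m, n ≤ m → (V₁ m \ V₁ (m + 1)).Finite :=
      fun m hm => hcon m hm
    have hcpt : IsCompact (X' ∪ (V₁ n \ X')) := by
      refine Xcpt V₁ hV₁X' hV₁0 hV₁anti hV₁base hX' (V₁ n \ X') ?_ ?_
      · intro x hx
        by_contra h
        exact hx.2 h
      · intro m
        rcases Nat.lt_or_ge m n with hmn | hmn
        · have : (V₁ n \ X') ∩ (V₁ m \ V₁ (m + 1)) = ∅ := by
            apply Set.eq_empty_iff_forall_notMem.2
            rintro x ⟨⟨hx1, -⟩, -, hx3⟩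
            exact hx3 (hV₁anti (m + 1) n hmn hx1)
          rw [this]
          exact Set.finite_empty
        · exact Set.Finite.subset (hfin m hmn) Set.inter_subset_right
    have : X' ∪ (V₁ n \ X') = V₁ n := by
      apply Set.Subset.antisymm
      · exact Set.union_subset (hV₁X' n) Set.diff_subset
      · intro x hx
        by_cases h : x ∈ X'
        · exact Or.inl h
        · exact Or.inr ⟨hx, h⟩
    rw [this] at hcpt
    exact hnc n hcpt
  choose mf hmf1 hmf2 using hinf
  set seq : ℕ → ℕ := fun k => Nat.rec 0 (fun _ sk => mf sk + 1) k with hseqdef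
  have hseqsucc : ∀ k, seq (k + 1) = mf (seq k) + 1 := fun k => rfl
  have hseqle : ∀ k, seq k ≤ seq (k + 1) := by
    intro k
    rw [hseqsucc]
    exact (hmf1 (seq k)).trans (Nat.le_succ _)
  have hseqmono : ∀ k l, k ≤ l → seq k ≤ seq l := by
    intro k l hkl
    induction l with
    | zero => rw [Nat.le_zero.1 hkl]
    | succ l ih =>
      rcases Nat.lt_or_ge k (l + 1) with h | h
      · exact (ih (Nat.lt_succ_iff.1 h)).trans (hseqle l)
      · rw [Nat.le_antisymm hkl h]
  have hseqge : ∀ k, k ≤ seq k := by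
    intro k
    induction k with
    | zero => exact Nat.zero_le _
    | succ k ih =>
      rw [hseqsucc]
      exact Nat.succ_le_succ (ih.trans (hmf1 (seq k)))
  refine ⟨fun k => V₁ (seq k), fun k => hV₁cl _, fun k => hV₁X' _, hV₁0 ▸ rfl, ?_, ?_, ?_, ?_⟩
  · exact fun n m hnm => hV₁anti _ _ (hseqmono n m hnm)
  · intro U hU hsub
    obtain ⟨n, hn⟩ := hV₁base U hU hsub
    exact ⟨n, (hV₁anti n (seq n) (hseqge n)).trans hn⟩
  · intro x hx
    obtain ⟨n, hn⟩ := hV₁esc x hx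
    exact ⟨n, fun h => hn (hV₁anti n (seq n) (hseqge n) h)⟩
  · intro k
    refine Set.Infinite.mono ?_ (hmf2 (seq k))
    intro x hx
    refine ⟨hV₁anti _ _ (hmf1 (seq k)) hx.1, ?_⟩
    show x ∉ V₁ (seq (k + 1))
    rw [hseqsucc]
    exact hx.2

theorem isOpen_of_isolated {X : Type*} [TopologicalSpace X] {s : Set X}
    (h : ∀ x ∈ s, IsOpen ({x} : Set X)) : IsOpen s := by
  have : s = ⋃ x ∈ s, {x} := by simp
  rw [this]
  exact isOpen_biUnion h

theorem main_homeo {X : Type*} [TopologicalSpace X]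
    (hX'cpt : IsCompact {x : X | ¬ IsOpen ({x} : Set X)})
    (V : ℕ → Set X)
    (hcl : ∀ n, IsClopen (V n))
    (hX'V : ∀ n, {x : X | ¬ IsOpen ({x} : Set X)} ⊆ V n)
    (hV0 : V 0 = Set.univ)
    (hanti : ∀ n m, n ≤ m → V m ⊆ V n)
    (hbase : ∀ U : Set X, IsOpen U → {x : X | ¬ IsOpen ({x} : Set X)} ⊆ U → ∃ n, V n ⊆ U)
    (hesc : ∀ x, IsOpen ({x} : Set X) → ∃ n, x ∉ V n)
    (e : ∀ k, ↥(V k \ V (k + 1)) ≃ ℕ) :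
    Nonempty
      (({f : C(X, Bool) | ∀ x, ¬ IsOpen ({x} : Set X) → f x = false} : Set C(X, Bool)) ≃ₜ
        ({g : C(Fan, Bool) | g none = false} : Set C(Fan, Bool))) := by
  classical
  set E : ℕ → Set X := fun k => V k \ V (k + 1) with hEdef
  have hEclopen : ∀ k, IsClopen (E k) := fun k => (hcl k).diff (hcl (k + 1))
  have h1 : ∀ k, ∀ x ∈ E k, IsOpen ({x} : Set X) := by
    intro k x hx
    by_contra h
    exact hx.2 (hX'V (k + 1) h)
  have h2 : ∀ k l (x : X), x ∈ E k → x ∈ E l → k = l := by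
    intro k l x hk hl
    by_contra hne
    rcases Nat.lt_or_ge k l with h | h
    · exact hk.2 (hanti (k + 1) l h hl.1)
    · rcases Nat.lt_or_ge l k with h' | h'
      · exact hl.2 (hanti (l + 1) k h' hk.1)
      · exact hne (Nat.le_antisymm h' h)
  have blockmem : ∀ (x : X) n, x ∉ V n → ∃ m, x ∈ E m := by
    intro x n
    induction n with
    | zero => intro h; exact absurd (hV0 ▸ Set.mem_univ x) h
    | succ n ih =>
      intro h
      by_cases hx : x ∈ V n
      · exact ⟨n, hx, h⟩
      · exact ih hx
  have h3 : ∀ x, IsOpen ({x} : Set X) → ∃ k, x ∈ E k := by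
    intro x hx
    obtain ⟨n, hn⟩ := hesc x hx
    exact blockmem x n hn
  -- the coding functions
  let blk : ∀ x, IsOpen ({x} : Set X) → ℕ := fun x hx => Classical.choose (h3 x hx)
  have hblk : ∀ x hx, x ∈ E (blk x hx) := fun x hx => Classical.choose_spec (h3 x hx)
  have code_eq : ∀ x hx k (hk : x ∈ E k),
      ((blk x hx, e (blk x hx) ⟨x, hblk x hx⟩) : ℕ × ℕ) = (k, e k ⟨x, hk⟩) := by
    intro x hx k hk
    have hkb : blk x hx = k := h2 _ _ x (hblk x hx) hk
    subst hkb
    rfl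
  -- forward map
  let gFun : C(X, Bool) → Fan → Bool := fun f z =>
    match z with
    | none => false
    | some p => f ((e p.1).symm p.2).val
  have gcont : ∀ f : C(X, Bool), (∀ x, ¬ IsOpen ({x} : Set X) → f x = false) →
      Continuous (gFun f) := by
    intro f hf
    refine fan_continuous_iff.2 ?_
    have hO : IsOpen (f ⁻¹' {false}) := (isOpen_discrete _).preimage f.continuous
    have hX'O : {x : X | ¬ IsOpen ({x} : Set X)} ⊆ f ⁻¹' {false} := fun x hx => hf x hx
    obtain ⟨n, hn⟩ := hbase _ hO hX'O
    refine ⟨n, fun p hp => ?_⟩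
    have hmem : ((e p.1).symm p.2).val ∈ E p.1 := ((e p.1).symm p.2).2
    exact hn (hanti n p.1 hp hmem.1)
  -- backward map
  let fFun : C(Fan, Bool) → X → Bool := fun g x =>
    if hx : IsOpen ({x} : Set X) then g (some (blk x hx, e (blk x hx) ⟨x, hblk x hx⟩))
    else false
  have fapp : ∀ (g : C(Fan, Bool)) (x : X), fFun g x =
      (if hx : IsOpen ({x} : Set X) then
        g (some (blk x hx, e (blk x hx) ⟨x, hblk x hx⟩)) else false) := fun _ _ => rfl
  have fcont : ∀ g : C(Fan, Bool), g none = false → Continuous (fFun g) := by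
    intro g hg
    refine IsLocallyConstant.continuous (IsLocallyConstant.iff_isOpen_fiber.2 ?_)
    intro b
    cases b with
    | true =>
      refine isOpen_of_isolated fun x hx => ?_
      by_contra h
      have hx' : fFun g x = true := hx
      rw [fapp, dif_neg h] at hx'
      exact Bool.noConfusion hx'
    | false =>
      obtain ⟨n, hn⟩ := exists_FanGn (show g ∈ FanG from hg)
      have hVn : V n ⊆ fFun g ⁻¹' {false} := by
        intro x hxV
        show fFun g x ∈ ({false} : Set Bool)
        rw [fapp]
        by_cases hx : IsOpen ({x} : Set X)
        · rw [dif_pos hx]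
          refine hn.2 _ ?_
          show n ≤ blk x hx
          by_contra hlt
          push_neg at hlt
          exact (hblk x hx).2 (hanti (blk x hx + 1) n hlt hxV)
        · rw [dif_neg hx]
          rfl
      have : fFun g ⁻¹' {false} = V n ∪ (fFun g ⁻¹' {false} \ V n) := by
        apply Set.Subset.antisymm
        · intro x hx
          by_cases h : x ∈ V n
          · exact Or.inl h
          · exact Or.inr ⟨hx, h⟩
        · exact Set.union_subset hVn Set.diff_subset
      rw [this]
      refine (hcl n).isOpen.union (isOpen_of_isolated fun x hx => ?_)
      by_contra h
      exact hx.2 (hX'V n h)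
  -- compactness transfer, fan to X
  have hKXcpt : ∀ K : Set Fan, IsCompact K →
      IsCompact ({x : X | ¬ IsOpen ({x} : Set X)} ∪
        ⋃ k, (fun j => ((e k).symm j).val) '' {j : ℕ | some (k, j) ∈ K}) := by
    intro K hK
    refine Xcpt V hX'V hV0 hanti hbase hX'cpt _ ?_ ?_
    · intro x hx
      obtain ⟨k, hk⟩ := Set.mem_iUnion.1 hx
      obtain ⟨j, hj, rfl⟩ := hk
      exact h1 k _ ((e k).symm j).2
    · intro m
      have hsub : (⋃ k, (fun j => ((e k).symm j).val) '' {j : ℕ | some (k, j) ∈ K}) ∩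
          (V m \ V (m + 1)) ⊆ (fun j => ((e m).symm j).val) '' {j : ℕ | some (m, j) ∈ K} := by
        rintro x ⟨hxA, hxE⟩
        obtain ⟨k, hk⟩ := Set.mem_iUnion.1 hxA
        obtain ⟨j, hj, rfl⟩ := hk
        have hkm : k = m := h2 k m _ ((e k).symm j).2 hxE
        subst hkm
        exact ⟨j, hj, rfl⟩
      exact Set.Finite.subset ((fan_compact_column_finite hK m).image _) hsub
  -- finiteness transfer, X to fan
  have hSfin : ∀ KX : Set X, IsCompact KX → ∀ m : ℕ,
      {j : ℕ | ((e m).symm j).val ∈ KX}.Finite := by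
    intro KX hKX m
    have hfinE : (KX ∩ E m).Finite :=
      finite_of_isCompact_of_isolated (hKX.inter_right (hEclopen m).isClosed)
        (fun x hx => h1 m x hx.2)
    have hsub : {j : ℕ | ((e m).symm j).val ∈ KX} ⊆
        (fun j => ((e m).symm j).val) ⁻¹' (KX ∩ E m) :=
      fun j hj => ⟨hj, ((e m).symm j).2⟩
    refine Set.Finite.subset (Set.Finite.preimage ?_ hfinE) hsub
    intro a _ b _ hab
    have : (e m).symm a = (e m).symm b := Subtype.val_injective hab
    exact (e m).symm.injective this
  -- the equivalence
  let Φ : ↥({f : C(X, Bool) | ∀ x, ¬ IsOpen ({x} : Set X) → f x = false} : Set C(X, Bool)) →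
      ↥({g : C(Fan, Bool) | g none = false} : Set C(Fan, Bool)) :=
    fun f => ⟨⟨gFun f.1, gcont f.1 f.2⟩, rfl⟩
  let Ψ : ↥({g : C(Fan, Bool) | g none = false} : Set C(Fan, Bool)) →
      ↥({f : C(X, Bool) | ∀ x, ¬ IsOpen ({x} : Set X) → f x = false} : Set C(X, Bool)) :=
    fun g => ⟨⟨fFun g.1, fcont g.1 g.2⟩, fun x hx => dif_neg hx⟩
  have hleft : Function.LeftInverse Ψ Φ := by
    intro f
    refine Subtype.ext (ContinuousMap.ext fun x => ?_)
    show fFun ⟨gFun f.1, _⟩ x = f.1 x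
    by_cases hx : IsOpen ({x} : Set X)
    · show (if hx : IsOpen ({x} : Set X) then _ else false) = f.1 x
      rw [dif_pos hx]
      show f.1 ((e (blk x hx)).symm ((e (blk x hx)) ⟨x, hblk x hx⟩)).val = f.1 x
      rw [Equiv.symm_apply_apply]
    · show (if hx : IsOpen ({x} : Set X) then _ else false) = f.1 x
      rw [dif_neg hx]
      exact (f.2 x hx).symm
  have hright : Function.RightInverse Ψ Φ := by
    intro g
    refine Subtype.ext (ContinuousMap.ext fun z => ?_)
    match z with
    | none => exact g.2.symm
    | some p =>
      obtain ⟨a, b⟩ := p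
      show fFun g.1 ((e a).symm b).val = g.1 (some (a, b))
      have hmem : ((e a).symm b).val ∈ E a := ((e a).symm b).2
      have hx : IsOpen ({((e a).symm b).val} : Set X) := h1 a _ hmem
      show (if hx : IsOpen ({((e a).symm b).val} : Set X) then
        g.1 (some (blk _ hx, e (blk _ hx) ⟨_, hblk _ hx⟩)) else false) = g.1 (some (a, b))
      rw [dif_pos hx]
      congr 1
      rw [code_eq _ hx a hmem]
      have : (⟨((e a).symm b).val, hmem⟩ : ↥(E a)) = (e a).symm b := Subtype.ext rfl
      change (some _ : Option (ℕ × ℕ)) = some _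
      rw [Option.some_inj, this, Equiv.apply_symm_apply]
  -- continuity of Φ
  have hΦcont : Continuous Φ := by
    refine Continuous.subtype_mk ?_ _
    rw [continuous_iff_continuousAt]
    intro f₀
    rw [ContinuousAt, (nhds_hasBasis_boolC _).tendsto_right_iff]
    intro K hK
    have hev : ∀ᶠ h in 𝓝 (f₀.1 : C(X, Bool)),
        ∀ y ∈ ({x : X | ¬ IsOpen ({x} : Set X)} ∪
          ⋃ k, (fun j => ((e k).symm j).val) '' {j : ℕ | some (k, j) ∈ K}), h y = f₀.1 y :=
      Filter.eventually_of_mem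
        ((isOpen_eqOnC f₀.1 (hKXcpt K hK)).mem_nhds (fun y _ => rfl)) (fun h hh => hh)
    filter_upwards [(continuous_subtype_val.tendsto f₀).eventually hev] with f hf
    intro z hz
    match z with
    | none => rfl
    | some p =>
      show f.1 ((e p.1).symm p.2).val = f₀.1 ((e p.1).symm p.2).val
      refine hf _ (Or.inr (Set.mem_iUnion.2 ⟨p.1, ⟨p.2, ?_, rfl⟩⟩))
      show some (p.1, p.2) ∈ K
      rwa [Prod.mk.eta]
  -- continuity of Ψ
  have hΨcont : Continuous Ψ := by
    refine Continuous.subtype_mk ?_ _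
    rw [continuous_iff_continuousAt]
    intro g₀
    rw [ContinuousAt, (nhds_hasBasis_boolC _).tendsto_right_iff]
    intro KX hKX
    have hKF : IsCompact ((insert (none : Fan)
        ((fun p => (some p : Fan)) '' {p : ℕ × ℕ | ((e p.1).symm p.2).val ∈ KX}) : Set Fan)) :=
      fan_isCompact_of_column_finite (fun m => hSfin KX hKX m)
    have hev : ∀ᶠ h in 𝓝 (g₀.1 : C(Fan, Bool)),
        ∀ z ∈ ((insert (none : Fan)
          ((fun p => (some p : Fan)) '' {p : ℕ × ℕ | ((e p.1).symm p.2).val ∈ KX}) : Set Fan)),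
          h z = g₀.1 z :=
      Filter.eventually_of_mem
        ((isOpen_eqOnC g₀.1 hKF).mem_nhds (fun z _ => rfl)) (fun h hh => hh)
    filter_upwards [(continuous_subtype_val.tendsto g₀).eventually hev] with g hg
    intro y hy
    show fFun g.1 y = fFun g₀.1 y
    by_cases hx : IsOpen ({y} : Set X)
    · show (if h : IsOpen ({y} : Set X) then _ else false) =
        (if h : IsOpen ({y} : Set X) then _ else false)
      rw [dif_pos hx, dif_pos hx]
      refine hg _ (Set.mem_insert_iff.2 (Or.inr ⟨(blk y hx, e (blk y hx) ⟨y, hblk y hx⟩), ?_, rfl⟩))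
      show ((e (blk y hx)).symm ((e (blk y hx)) ⟨y, hblk y hx⟩)).val ∈ KX
      rw [Equiv.symm_apply_apply]
      exact hy
    · show (if h : IsOpen ({y} : Set X) then _ else false) =
        (if h : IsOpen ({y} : Set X) then _ else false)
      rw [dif_neg hx, dif_neg hx]
  exact ⟨⟨⟨Φ, Ψ, hleft, hright⟩, hΦcont, hΨcont⟩⟩

/-! ### Translations and final assembly -/

noncomputable def xorMap {Z : Type*} [TopologicalSpace Z] (f₀ : C(Z, Bool)) :
    C(Z, Bool) → C(Z, Bool) := fun h =>
  ⟨fun x => xor (f₀ x) (h x), by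
    have h1 : Continuous fun x => (f₀ x, h x) := f₀.continuous.prodMk h.continuous
    exact (continuous_of_discreteTopology (f := fun p : Bool × Bool => xor p.1 p.2)).comp h1⟩

theorem xorMap_apply {Z : Type*} [TopologicalSpace Z] (f₀ h : C(Z, Bool)) (x : Z) :
    xorMap f₀ h x = xor (f₀ x) (h x) := rfl

theorem xorMap_continuous {Z : Type*} [TopologicalSpace Z] (f₀ : C(Z, Bool)) :
    Continuous (xorMap f₀) := by
  rw [continuous_iff_continuousAt]
  intro h₀
  rw [ContinuousAt, (nhds_hasBasis_boolC (xorMap f₀ h₀)).tendsto_right_iff]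
  intro K hK
  filter_upwards [(isOpen_eqOnC h₀ hK).mem_nhds (fun x _ => rfl)] with h hh
  intro x hx
  rw [xorMap_apply, xorMap_apply, hh x hx]

theorem xorMap_invol {Z : Type*} [TopologicalSpace Z] (f₀ h : C(Z, Bool)) :
    xorMap f₀ (xorMap f₀ h) = h := by
  ext x
  rw [xorMap_apply, xorMap_apply]
  cases hb : f₀ x <;> cases hc : h x <;> rfl

theorem xorMap_self {Z : Type*} [TopologicalSpace Z] (f₀ : C(Z, Bool)) :
    xorMap f₀ f₀ = ContinuousMap.const Z false := by
  ext x
  rw [xorMap_apply]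
  cases hb : f₀ x <;> rfl

theorem seq_of_homeo {A B : Type*} [TopologicalSpace A] [TopologicalSpace B]
    (e : A ≃ₜ B) (h : SequentialSpace A) : SequentialSpace B := by
  letI := h
  refine ⟨fun F hF => ?_⟩
  have h1 : IsSeqClosed (e ⁻¹' F) := hF.preimage e.continuous.seqContinuous
  have h2 : IsClosed (e ⁻¹' F) := h1.isClosed
  have h3 : F = e.symm ⁻¹' (e ⁻¹' F) := by
    ext b
    simp
  rw [h3]
  exact h2.preimage e.symm.continuous

theorem stmt14 {X : Type*} [TopologicalSpace X] [PolishSpace X]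
    (hzd : ∀ (x : X) (U : Set X), IsOpen U → x ∈ U →
      ∃ V : Set X, IsClopen V ∧ x ∈ V ∧ V ⊆ U)
    (hnlc : ¬ WeaklyLocallyCompactSpace X)
    (hX' : IsCompact {x : X | ¬ IsOpen ({x} : Set X)}) :
    Nonempty
      (({f : C(X, Bool) | ∀ x, ¬ IsOpen ({x} : Set X) → f x = false} : Set C(X, Bool)) ≃ₜ
        ({g : C(Fan, Bool) | g none = false} : Set C(Fan, Bool))) ∧
    SequentialSpace C(X, Bool) := by
  classical
  obtain ⟨V, hcl, hX'V, hV0, hanti, hbase, hesc, hinf⟩ := X_structure hzd hnlc hX'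
  have hsub_iso : ∀ k, (V k \ V (k + 1)) ⊆ {x : X | IsOpen ({x} : Set X)} := by
    intro k x hx
    by_contra h
    exact hx.2 (hX'V (k + 1) h)
  have hcnt : ∀ k, (V k \ V (k + 1)).Countable := fun k =>
    Set.Countable.mono (hsub_iso k) countable_isolated
  have e : ∀ k, ↥(V k \ V (k + 1)) ≃ ℕ := by
    intro k
    haveI : Countable ↥(V k \ V (k + 1)) := (hcnt k).to_subtype
    haveI : Infinite ↥(V k \ V (k + 1)) := (hinf k).to_subtype
    letI := Classical.choice (nonempty_denumerable ↥(V k \ V (k + 1)))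
    exact Denumerable.eqv _
  have hhomeo := main_homeo hX' V hcl hX'V hV0 hanti hbase hesc e
  refine ⟨hhomeo, ?_⟩
  obtain ⟨eH⟩ := hhomeo
  have hGseq : SequentialSpace
      ↥({g : C(Fan, Bool) | g none = false} : Set C(Fan, Bool)) := sequentialSpace_FanG
  have hHseq : SequentialSpace
      ↥({f : C(X, Bool) | ∀ x, ¬ IsOpen ({x} : Set X) → f x = false} : Set C(X, Bool)) :=
    seq_of_homeo eH.symm hGseq
  have hHopen : IsOpen
      ({f : C(X, Bool) | ∀ x, ¬ IsOpen ({x} : Set X) → f x = false} : Set C(X, Bool)) := by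
    have heq : ({f : C(X, Bool) | ∀ x, ¬ IsOpen ({x} : Set X) → f x = false} : Set C(X, Bool)) =
        {f : C(X, Bool) | Set.MapsTo f {x : X | ¬ IsOpen ({x} : Set X)} {false}} := by
      ext f
      constructor
      · intro hf x hx
        exact hf x hx
      · intro hf x hx
        exact hf hx
    rw [heq]
    exact ContinuousMap.isOpen_setOf_mapsTo hX' (isOpen_discrete _)
  refine ⟨fun F hF => ?_⟩
  rw [← isOpen_compl_iff, isOpen_iff_mem_nhds]
  intro f₀ hf₀
  set T : C(X, Bool) → C(X, Bool) := xorMap f₀ with hTdef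
  have hTcont : Continuous T := xorMap_continuous f₀
  set F' : Set C(X, Bool) := T ⁻¹' F with hF'def
  have hF'seq : IsSeqClosed F' := hF.preimage hTcont.seqContinuous
  set c0 : C(X, Bool) := ContinuousMap.const X false with hc0def
  have hc0H : c0 ∈ ({f : C(X, Bool) | ∀ x, ¬ IsOpen ({x} : Set X) → f x = false} :
      Set C(X, Bool)) := fun x _ => rfl
  have hc0F' : c0 ∉ F' := by
    intro hmem
    rw [hF'def, Set.mem_preimage, hc0def, ← xorMap_self f₀, hTdef, xorMap_invol] at hmem
    exact hf₀ hmem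
  haveI := hHseq
  have hsubseq : IsSeqClosed (Subtype.val ⁻¹' F' :
      Set ↥({f : C(X, Bool) | ∀ x, ¬ IsOpen ({x} : Set X) → f x = false} : Set C(X, Bool))) :=
    hF'seq.preimage continuous_subtype_val.seqContinuous
  have hsubclosed := hsubseq.isClosed
  obtain ⟨O, hOopen, hOeq⟩ := isOpen_induced_iff.1 hsubclosed.isOpen_compl
  have hc0O : c0 ∈ O := by
    have : (⟨c0, hc0H⟩ : ↥({f : C(X, Bool) | ∀ x, ¬ IsOpen ({x} : Set X) → f x = false} :
        Set C(X, Bool))) ∈ Subtype.val ⁻¹' O := by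
      rw [hOeq]
      exact hc0F'
    exact this
  have hWnhds : T ⁻¹' (O ∩ {f : C(X, Bool) | ∀ x, ¬ IsOpen ({x} : Set X) → f x = false})
      ∈ 𝓝 f₀ := by
    refine (((hOopen.inter hHopen).preimage hTcont).mem_nhds ?_)
    have hTf₀ : T f₀ ∈ O ∩ {f : C(X, Bool) | ∀ x, ¬ IsOpen ({x} : Set X) → f x = false} := by
      rw [hTdef, xorMap_self f₀]
      exact ⟨hc0O, hc0H⟩
    exact hTf₀
  refine Filter.mem_of_superset hWnhds ?_
  intro h hh hhF
  have hThH : T h ∈ ({f : C(X, Bool) | ∀ x, ¬ IsOpen ({x} : Set X) → f x = false} :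
      Set C(X, Bool)) := hh.2
  have hThF' : T h ∈ F' := by
    rw [hF'def, Set.mem_preimage, hTdef, xorMap_invol]
    exact hhF
  have : (⟨T h, hThH⟩ : ↥({f : C(X, Bool) | ∀ x, ¬ IsOpen ({x} : Set X) → f x = false} :
      Set C(X, Bool))) ∈ Subtype.val ⁻¹' O := hh.1
  rw [hOeq] at this
  exact this hThF'
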